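/- Let p, q ∈ ℝ[X₁,…,Xₙ] be coprime polynomials, X ⊆ ℝⁿ a nonempty open set on which q does not vanish, and suppose the rational function p/q takes values in a subfield F ⊆ ℝ at every point of some grid X₁ × ⋯ × Xₙ ⊆ X where each Xᵢ ⊆ F has cardinality d > deg p + deg q. If the linear system expressing p(x_j) − y_j·q(x_j) = 0 over all grid points x_j (with y_j = p(x_j)/q(x_j) ∈ F) admits a nonzero solution with coefficients in F, then there exists a nonzero λ ∈ ℝ with λp, λq ∈ F[X₁,…,Xₙ]. -/

import Mathlib

open MvPolynomial Finset

lemma grid_vanish_eq_zero : ∀ (n : ℕ) (f : MvPolynomial (Fin n) ℝ) (G : Fin n → Finset ℝ),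
    (∀ i, f.degreeOf i < (G i).card) →
    (∀ x : Fin n → ℝ, (∀ i, x i ∈ G i) → MvPolynomial.eval x f = 0) → f = 0 := by
  intro n
  induction n with
  | zero =>
    intro f G _ hvan
    have h := hvan isEmptyElim (fun i => i.elim0)
    rw [eq_C_of_isEmpty f] at h ⊢
    simp only [eval_C] at h
    simp [h]
  | succ n ih =>
    intro f G hdeg hvan
    have key : ∀ i, (finSuccEquiv ℝ n f).coeff i = 0 := by
      intro i
      apply ih _ (fun j => G j.succ)
      · intro j
        exact lt_of_le_of_lt (degreeOf_coeff_finSuccEquiv f j i) (hdeg j.succ)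
      · intro y hy
        have hQ : Polynomial.map (eval y) (finSuccEquiv ℝ n f) = 0 := by
          apply Polynomial.eq_zero_of_natDegree_lt_card_of_eval_eq_zero' _ (G 0)
          · intro t ht
            rw [← eval_eq_eval_mv_eval']
            apply hvan
            intro j
            refine Fin.cases ?_ ?_ j
            · simpa using ht
            · intro j; simpa using hy j
          · exact lt_of_le_of_lt Polynomial.natDegree_map_le
              ((natDegree_finSuccEquiv f).le.trans_lt (hdeg 0))
        have := congrArg (fun P => Polynomial.coeff P i) hQ
        simpa [Polynomial.coeff_map] using this
    have h0 : finSuccEquiv ℝ n f = 0 := Polynomial.ext fun i => by simp [key i]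
    exact (map_eq_zero_iff _ (finSuccEquiv ℝ n).injective).mp h0

lemma top_comp_ne_zero {σ : Type*} {a : MvPolynomial σ ℝ} (ha : a ≠ 0) :
    homogeneousComponent a.totalDegree a ≠ 0 := by
  obtain ⟨m, hm, hdeg⟩ := Finset.exists_mem_eq_sup a.support
    (support_nonempty.mpr ha) (fun s => s.sum fun _ e => e)
  intro h0
  have := congrArg (coeff m) h0
  rw [coeff_homogeneousComponent] at this
  have hdm : m.degree = a.totalDegree := by
    rw [Finsupp.degree, MvPolynomial.totalDegree, hdeg]; rfl
  rw [if_pos hdm] at this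
  exact (mem_support_iff.mp hm) (by simpa using this)

lemma totalDegree_add_le_totalDegree_mul {σ : Type*} {a b : MvPolynomial σ ℝ}
    (ha : a ≠ 0) (hb : b ≠ 0) :
    a.totalDegree + b.totalDegree ≤ (a * b).totalDegree := by
  set da := a.totalDegree
  set db := b.totalDegree
  have hcomp : homogeneousComponent (da + db) (a * b) =
      homogeneousComponent da a * homogeneousComponent db b := by
    conv_lhs => rw [← sum_homogeneousComponent a, ← sum_homogeneousComponent b]
    rw [Finset.sum_mul_sum, map_sum]
    rw [Finset.sum_eq_single da]
    · rw [map_sum, Finset.sum_eq_single db]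
      · rw [homogeneousComponent_of_mem
          (((homogeneousComponent_isHomogeneous da a).mul
            (homogeneousComponent_isHomogeneous db b)))]
        simp
      · intro j hj hjne
        rw [homogeneousComponent_of_mem
          (((homogeneousComponent_isHomogeneous da a).mul
            (homogeneousComponent_isHomogeneous j b)))]
        rw [if_neg (by omega)]
      · intro h; exact absurd (Finset.self_mem_range_succ db) h
    · intro i hi hine
      rw [map_sum, Finset.sum_eq_zero]
      intro j hj
      rw [homogeneousComponent_of_mem
        (((homogeneousComponent_isHomogeneous i a).mul
          (homogeneousComponent_isHomogeneous j b)))]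
      rw [if_neg]
      simp only [Finset.mem_range] at hi hj
      omega
    · intro h; exact absurd (Finset.self_mem_range_succ da) h
  by_contra hlt
  push_neg at hlt
  have := homogeneousComponent_eq_zero _ (a*b) hlt
  rw [hcomp] at this
  exact mul_ne_zero (top_comp_ne_zero ha) (top_comp_ne_zero hb) this

lemma eq_C_of_totalDegree_eq_zero' {σ : Type*} {r : MvPolynomial σ ℝ}
    (h : r.totalDegree = 0) : r = MvPolynomial.C (MvPolynomial.coeff 0 r) := by
  classical
  ext m
  rw [coeff_C]
  split_ifs with hm
  · rw [← hm]
  · by_contra hc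
    have hmem : m ∈ r.support := mem_support_iff.mpr hc
    have := le_totalDegree hmem
    rw [h, Nat.le_zero] at this
    have hd0 : m.degree = 0 := by
      rw [Finsupp.degree_eq_zero_iff]; ext i; simp [Finsupp.sum] at this; simpa using this i
    exact hm ((Finsupp.degree_eq_zero_iff m).mp hd0).symm

theorem stmt_19 (n : ℕ) (F : Subfield ℝ)
    (p q : MvPolynomial (Fin n) ℝ) (hcop : IsCoprime p q)
    (X : Set (Fin n → ℝ)) (hXne : X.Nonempty) (hXopen : IsOpen X)
    (hq : ∀ x ∈ X, MvPolynomial.eval x q ≠ 0)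
    (d : ℕ) (hd : p.totalDegree + q.totalDegree < d)
    (G : Fin n → Finset ℝ) (hGF : ∀ i, ∀ a ∈ G i, a ∈ F) (hGcard : ∀ i, (G i).card = d)
    (hGX : ∀ x : Fin n → ℝ, (∀ i, x i ∈ G i) → x ∈ X)
    (hval : ∀ x : Fin n → ℝ, (∀ i, x i ∈ G i) →
      MvPolynomial.eval x p / MvPolynomial.eval x q ∈ F)
    -- the linear system admits a nonzero solution with coefficients in F:
    (hsol : ∃ p' q' : MvPolynomial (Fin n) ℝ,
      ¬ (p' = 0 ∧ q' = 0) ∧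
      (∀ k, MvPolynomial.coeff k p' ∈ F) ∧ (∀ k, MvPolynomial.coeff k q' ∈ F) ∧
      p'.totalDegree ≤ p.totalDegree ∧ q'.totalDegree ≤ q.totalDegree ∧
      (∀ x : Fin n → ℝ, (∀ i, x i ∈ G i) →
        MvPolynomial.eval x p' -
          (MvPolynomial.eval x p / MvPolynomial.eval x q) * MvPolynomial.eval x q' = 0)) :
    ∃ lam : ℝ, lam ≠ 0 ∧
      (∀ k, lam * MvPolynomial.coeff k p ∈ F) ∧
      (∀ k, lam * MvPolynomial.coeff k q ∈ F) := by
  obtain ⟨p', q', hne, hpF, hqF, hpd, hqd, hlin⟩ := hsol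
  -- q is a nonzero polynomial
  have hGne : ∀ i, ∃ a, a ∈ G i := by
    intro i
    have : 0 < (G i).card := by rw [hGcard i]; omega
    exact Finset.card_pos.mp this
  set x0 : Fin n → ℝ := fun i => (hGne i).choose with hx0
  have hx0G : ∀ i, x0 i ∈ G i := fun i => (hGne i).choose_spec
  have hq0 : MvPolynomial.eval x0 q ≠ 0 := hq x0 (hGX x0 hx0G)
  have hqne : q ≠ 0 := fun h => hq0 (by simp [h])
  -- the polynomial p' * q - p * q' vanishes on the grid, hence is zero
  have hkey : p' * q = p * q' := by
    have hzero : p' * q - p * q' = 0 := by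
      apply grid_vanish_eq_zero n _ G
      · intro i
        have h1 : (p' * q - p * q').totalDegree ≤
            max (p' * q).totalDegree (p * q').totalDegree := by
          rw [sub_eq_add_neg]
          exact (MvPolynomial.totalDegree_add _ _).trans
            (by rw [MvPolynomial.totalDegree_neg])
        have h2 : (p' * q).totalDegree ≤ p.totalDegree + q.totalDegree :=
          (MvPolynomial.totalDegree_mul _ _).trans (Nat.add_le_add_right hpd _)
        have h3 : (p * q').totalDegree ≤ p.totalDegree + q.totalDegree :=
          (MvPolynomial.totalDegree_mul _ _).trans (Nat.add_le_add_left hqd _)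
        have := MvPolynomial.degreeOf_le_totalDegree (p' * q - p * q') i
        rw [hGcard i]
        omega
      · intro x hx
        have hqx : MvPolynomial.eval x q ≠ 0 := hq x (hGX x hx)
        have h := hlin x hx
        have hp' : MvPolynomial.eval x p' =
            (MvPolynomial.eval x p / MvPolynomial.eval x q) * MvPolynomial.eval x q' := by
          linarith
        simp only [map_sub, map_mul, hp']
        field_simp
        ring
    exact sub_eq_zero.mp hzero
  have hq'ne : q' ≠ 0 := by
    intro h
    apply hne
    rw [h, mul_zero] at hkey
    exact ⟨by simpa using mul_eq_zero.mp hkey |>.resolve_right hqne, h⟩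
  -- q divides q'
  have hdvd : q ∣ q' :=
    hcop.symm.dvd_of_dvd_mul_left ⟨p', by rw [← hkey]; ring⟩
  obtain ⟨r, hr⟩ := hdvd
  have hrne : r ≠ 0 := by
    intro h; rw [h, mul_zero] at hr; exact hq'ne hr
  have hrdeg : r.totalDegree = 0 := by
    have := totalDegree_add_le_totalDegree_mul hqne hrne
    rw [← hr] at this
    omega
  have hrC : r = MvPolynomial.C (MvPolynomial.coeff 0 r) :=
    eq_C_of_totalDegree_eq_zero' hrdeg
  set lam := MvPolynomial.coeff 0 r with hlam
  have hlamne : lam ≠ 0 := by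
    intro h; apply hrne; rw [hrC, h, map_zero]
  -- p' = p * r
  have hp'eq : p' = p * r := by
    have : p' * q = (p * r) * q := by rw [hkey, hr]; ring
    exact mul_right_cancel₀ hqne this
  refine ⟨lam, hlamne, ?_, ?_⟩
  · intro k
    have : lam * MvPolynomial.coeff k p = MvPolynomial.coeff k p' := by
      rw [hp'eq, hrC, mul_comm p, MvPolynomial.coeff_C_mul]
    rw [this]; exact hpF k
  · intro k
    have : lam * MvPolynomial.coeff k q = MvPolynomial.coeff k q' := by
      rw [hr, hrC, mul_comm q, MvPolynomial.coeff_C_mul]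
    rw [this]; exact hqF k
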